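/- Let n ≥ 2 and let weights ω₀,...,ω_{n-1} and points t₁,...,t_{n-1} ∈ ℝ with t₀ = 0, tₙ = 1, Sₖ = ∑_{j=0}^{k} ωⱼ satisfy Sₖ = (tₖ + t_{k+1})/2 for k = 0,...,n-1 and tₖ = S_{k-1} + ωₖ/2 for k = 1,...,n-1. Then ω_{k+1} = ωₖ for all k = 1,...,n-2, i.e., ω₁ = ω₂ = ... = ω_{n-1}. -/

import Mathlib

theorem stmt_7 (n : ℕ) (hn : 2 ≤ n) (ω t : ℕ → ℝ)
    (ht0 : t 0 = 0) (htn : t n = 1)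
    (hS : ∀ k < n, (∑ j ∈ Finset.range (k + 1), ω j) = (t k + t (k + 1)) / 2)
    (ht : ∀ k, 1 ≤ k → k ≤ n - 1 →
      t k = (∑ j ∈ Finset.range k, ω j) + ω k / 2) :
    ∀ k, 1 ≤ k → k ≤ n - 2 → ω (k + 1) = ω k := by
  intro k hk1 hk2
  have hkn : k < n := by omega
  have h1 := hS k hkn
  have h2 := ht k hk1 (by omega)
  have h3 := ht (k + 1) (by omega) (by omega)
  rw [Finset.sum_range_succ] at h1 h3
  linarith
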